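/- Let v_1,...,v_n be real numbers and Δ a real number with min_i v_i < Δ < max_i v_i. Then the maximum of Π_{i=1}^n p_i over probability vectors (p_1,...,p_n) with p_i > 0, Σ p_i = 1, and Σ p_i (v_i − Δ) = 0 is attained, and at the maximizer p_i = (1/n)(1 + λ(v_i − Δ))^{−1} for some λ satisfying (1/n) Σ_i (v_i − Δ)/(1 + λ(v_i − Δ)) = 0. -/

import Mathlib

open Finset

/-- If `min_i v_i < Δ < max_i v_i`, the maximum of `Π pᵢ` over
probability vectors with `pᵢ > 0`, `Σ pᵢ = 1`, `Σ pᵢ (vᵢ − Δ) = 0` is attained,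
and the maximizer has the form `pᵢ = (1/n)(1 + λ(vᵢ − Δ))⁻¹` for a Lagrange
multiplier `λ` solving `(1/n) Σᵢ (vᵢ − Δ)/(1 + λ(vᵢ − Δ)) = 0`. -/
theorem empirical_likelihood_maximizer
    (n : ℕ) (hn : 0 < n) (v : Fin n → ℝ) (Δ : ℝ)
    (hmin : ∃ i, v i < Δ) (hmax : ∃ i, Δ < v i) :
    ∃ p : Fin n → ℝ,
      (∀ i, 0 < p i) ∧ (∑ i, p i = 1) ∧ (∑ i, p i * (v i - Δ) = 0) ∧
      (∀ q : Fin n → ℝ, (∀ i, 0 < q i) → (∑ i, q i = 1) →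
        (∑ i, q i * (v i - Δ) = 0) → ∏ i, q i ≤ ∏ i, p i) ∧
      ∃ lam : ℝ,
        (∀ i, p i = (1 / (n : ℝ)) * (1 + lam * (v i - Δ))⁻¹) ∧
        (1 / (n : ℝ)) * ∑ i, (v i - Δ) / (1 + lam * (v i - Δ)) = 0 := by
  haveI : Nonempty (Fin n) := ⟨⟨0, hn⟩⟩
  have hnR : (0:ℝ) < n := Nat.cast_pos.mpr hn
  set u : Fin n → ℝ := fun i => v i - Δ with hu_def
  have huv : ∀ i, v i - Δ = u i := fun _ => rfl
  simp only [huv]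
  obtain ⟨i₀, hi₀⟩ := Finite.exists_max u
  obtain ⟨i₁, hi₁⟩ := Finite.exists_min u
  set M := u i₀ with hM_def
  set m := u i₁ with hm_def
  have hM : 0 < M := by
    obtain ⟨j, hj⟩ := hmax
    exact lt_of_lt_of_le (sub_pos.mpr hj) (hi₀ j)
  have hm : m < 0 := by
    obtain ⟨j, hj⟩ := hmin
    exact lt_of_le_of_lt (hi₁ j) (sub_neg.mpr hj)
  have hk₁ : (0:ℝ) < (n:ℝ) * (-m) + 1 := by nlinarith
  have hk₂ : (0:ℝ) < (n:ℝ) * M + 1 := by nlinarith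
  set δ₁ : ℝ := min 1 (M / ((n:ℝ) * (-m) + 1)) with hδ₁_def
  set δ₂ : ℝ := min 1 ((-m) / ((n:ℝ) * M + 1)) with hδ₂_def
  have hδ₁pos : 0 < δ₁ := lt_min one_pos (div_pos hM hk₁)
  have hδ₂pos : 0 < δ₂ := lt_min one_pos (div_pos (neg_pos.mpr hm) hk₂)
  have hδ₁le : δ₁ ≤ 1 := min_le_left _ _
  have hδ₂le : δ₂ ≤ 1 := min_le_left _ _
  set l₁ : ℝ := (δ₁ - 1) / M with hl₁_def
  set l₂ : ℝ := (δ₂ - 1) / m with hl₂_def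
  have hl₁M : l₁ * M = δ₁ - 1 := by
    rw [hl₁_def]; field_simp
  have hl₂m : l₂ * m = δ₂ - 1 := by
    rw [hl₂_def]; exact div_mul_cancel₀ _ hm.ne
  clear_value M m δ₁ δ₂ l₁ l₂
  have hl₁nonpos : l₁ ≤ 0 := by nlinarith [hl₁M]
  have hl₂nonneg : 0 ≤ l₂ := by nlinarith [hl₂m]
  have hl₁l₂ : l₁ ≤ l₂ := le_trans hl₁nonpos hl₂nonneg
  -- positivity of denominators on [l₁, l₂]
  have hpos : ∀ l ∈ Set.Icc l₁ l₂, ∀ i, 0 < 1 + l * u i := by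
    rintro l ⟨hll₁, hll₂⟩ i
    rcases le_or_gt 0 (u i) with hui | hui
    · have h1 : u i ≤ M := hi₀ i
      nlinarith [mul_le_mul_of_nonneg_right hll₁ hui]
    · have h1 : m ≤ u i := hi₁ i
      nlinarith [mul_le_mul_of_nonneg_left hll₂ (le_of_lt (neg_pos.mpr hui))]
  set g : ℝ → ℝ := fun l => ∑ i, u i / (1 + l * u i) with hg_def
  have hgcont : ContinuousOn g (Set.Icc l₁ l₂) := by
    apply continuousOn_finset_sum
    intro i _
    exact ContinuousOn.div continuousOn_const
      ((continuous_const.add (continuous_id.mul continuous_const)).continuousOn)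
      (fun l hl => ne_of_gt (hpos l hl i))
  have hl₁mem : l₁ ∈ Set.Icc l₁ l₂ := ⟨le_refl _, hl₁l₂⟩
  have hl₂mem : l₂ ∈ Set.Icc l₁ l₂ := ⟨hl₁l₂, le_refl _⟩
  have hcard0 : ∀ j : Fin n, (((univ : Finset (Fin n)).erase j).card : ℝ) ≤ n := by
    intro j
    have h := Finset.card_le_card (Finset.erase_subset j (univ : Finset (Fin n)))
    rw [Finset.card_univ, Fintype.card_fin] at h
    exact_mod_cast h
  -- value at l₁ is nonnegative
  have hg₁ : 0 ≤ g l₁ := by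
    have hsplit : u i₀ / (1 + l₁ * u i₀) + ∑ i ∈ univ.erase i₀, u i / (1 + l₁ * u i)
        = ∑ i, u i / (1 + l₁ * u i) :=
      Finset.add_sum_erase _ (fun i => u i / (1 + l₁ * u i)) (mem_univ i₀)
    have hgeq : g l₁ = ∑ i, u i / (1 + l₁ * u i) := rfl
    have hden : (1 : ℝ) + l₁ * u i₀ = δ₁ := by rw [← hM_def]; linarith [hl₁M]
    have hterm : u i₀ / (1 + l₁ * u i₀) = M / δ₁ := by rw [hden, ← hM_def]
    have hbig : (n:ℝ) * (-m) + 1 ≤ M / δ₁ := by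
      have h2 : δ₁ ≤ M / ((n:ℝ) * (-m) + 1) := by rw [hδ₁_def]; exact min_le_right _ _
      have h3 : M / (M / ((n:ℝ) * (-m) + 1)) = (n:ℝ) * (-m) + 1 := by
        field_simp
      calc (n:ℝ) * (-m) + 1 = M / (M / ((n:ℝ) * (-m) + 1)) := h3.symm
        _ ≤ M / δ₁ := div_le_div_of_nonneg_left (le_of_lt hM) hδ₁pos h2
    have hrest : ((univ.erase i₀).card : ℝ) * m ≤ ∑ i ∈ univ.erase i₀, u i / (1 + l₁ * u i) := by
      rw [← nsmul_eq_mul, ← Finset.sum_const]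
      apply Finset.sum_le_sum
      intro i _
      have hd : 0 < 1 + l₁ * u i := hpos l₁ hl₁mem i
      rw [le_div_iff₀ hd]
      rcases le_or_gt 0 (u i) with hui | hui
      · exact le_trans (le_of_lt (mul_neg_of_neg_of_pos hm hd)) hui
      · have h1 : m ≤ u i := hi₁ i
        have hd1 : (1:ℝ) ≤ 1 + l₁ * u i := by
          have h := mul_nonneg (neg_nonneg.mpr hl₁nonpos) (neg_nonneg.mpr hui.le)
          rw [neg_mul_neg] at h
          linarith
        have h2 := mul_le_mul_of_nonpos_left hd1 hm.le
        linarith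
    have hcm : (n:ℝ) * m ≤ ((univ.erase i₀).card : ℝ) * m :=
      mul_le_mul_of_nonpos_right (hcard0 i₀) hm.le
    rw [hgeq, ← hsplit, hterm]
    have hring : (n:ℝ) * (-m) = -((n:ℝ) * m) := by ring
    linarith
  -- value at l₂ is nonpositive
  have hg₂ : g l₂ ≤ 0 := by
    have hsplit : u i₁ / (1 + l₂ * u i₁) + ∑ i ∈ univ.erase i₁, u i / (1 + l₂ * u i)
        = ∑ i, u i / (1 + l₂ * u i) :=
      Finset.add_sum_erase _ (fun i => u i / (1 + l₂ * u i)) (mem_univ i₁)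
    have hgeq : g l₂ = ∑ i, u i / (1 + l₂ * u i) := rfl
    have hden : (1 : ℝ) + l₂ * u i₁ = δ₂ := by rw [← hm_def]; linarith [hl₂m]
    have hterm : u i₁ / (1 + l₂ * u i₁) = m / δ₂ := by rw [hden, ← hm_def]
    have hbig : m / δ₂ ≤ -((n:ℝ) * M + 1) := by
      have h2 : δ₂ ≤ (-m) / ((n:ℝ) * M + 1) := by rw [hδ₂_def]; exact min_le_right _ _
      have h3 : (-m) / ((-m) / ((n:ℝ) * M + 1)) = (n:ℝ) * M + 1 := by
        have hmne : -m ≠ 0 := by linarith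
        field_simp [hmne, hk₂.ne']
        exact div_self hm.ne
      have h4 : (n:ℝ) * M + 1 ≤ (-m) / δ₂ := by
        calc (n:ℝ) * M + 1 = (-m) / ((-m) / ((n:ℝ) * M + 1)) := h3.symm
          _ ≤ (-m) / δ₂ := div_le_div_of_nonneg_left (by linarith) hδ₂pos h2
      have h5 : (-m) / δ₂ = -(m / δ₂) := by ring
      linarith [h5 ▸ h4]
    have hrest : ∑ i ∈ univ.erase i₁, u i / (1 + l₂ * u i) ≤ ((univ.erase i₁).card : ℝ) * M := by
      rw [← nsmul_eq_mul, ← Finset.sum_const]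
      apply Finset.sum_le_sum
      intro i _
      have hd : 0 < 1 + l₂ * u i := hpos l₂ hl₂mem i
      rw [div_le_iff₀ hd]
      rcases le_or_gt (u i) 0 with hui | hui
      · exact le_trans hui (mul_nonneg hM.le hd.le)
      · have h1 : u i ≤ M := hi₀ i
        have hd1 : (1:ℝ) ≤ 1 + l₂ * u i := by
          have := mul_nonneg hl₂nonneg hui.le
          linarith
        have h2 := mul_le_mul_of_nonneg_left hd1 hM.le
        linarith
    have hcM : ((univ.erase i₁).card : ℝ) * M ≤ (n:ℝ) * M :=
      mul_le_mul_of_nonneg_right (hcard0 i₁) hM.le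
    rw [hgeq, ← hsplit, hterm]
    linarith
  -- IVT
  obtain ⟨lam, hlammem, hglam0⟩ := intermediate_value_Icc' hl₁l₂ hgcont ⟨hg₂, hg₁⟩
  have hden : ∀ i, 0 < 1 + lam * u i := hpos lam hlammem
  have hglam : ∑ i, u i / (1 + lam * u i) = 0 := hglam0
  set p : Fin n → ℝ := fun i => (1 / (n : ℝ)) * (1 + lam * u i)⁻¹ with hp_def
  have hppos : ∀ i, 0 < p i := fun i =>
    mul_pos (by positivity) (inv_pos.mpr (hden i))
  have hpu : ∑ i, p i * u i = 0 := by
    have h1 : ∀ i, p i * u i = (1 / (n:ℝ)) * (u i / (1 + lam * u i)) := by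
      intro i
      simp only [hp_def]
      have := (hden i).ne'
      field_simp
    rw [Finset.sum_congr rfl (fun i _ => h1 i), ← Finset.mul_sum, hglam, mul_zero]
  have hpsum : ∑ i, p i = 1 := by
    have h1 : ∀ i, p i = (1 / (n:ℝ)) * (1 - lam * (u i / (1 + lam * u i))) := by
      intro i
      simp only [hp_def]
      have := (hden i).ne'
      congr 1
      field_simp
      ring
    rw [Finset.sum_congr rfl (fun i _ => h1 i), ← Finset.mul_sum]
    rw [Finset.sum_sub_distrib, ← Finset.mul_sum, hglam, mul_zero, sub_zero]
    rw [Finset.sum_const, Finset.card_univ, Fintype.card_fin, nsmul_eq_mul, mul_one]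
    field_simp
  refine ⟨p, hppos, hpsum, hpu, ?_, lam, fun i => rfl, by rw [hglam, mul_zero]⟩
  -- optimality
  intro q hq0 hq1 hq2
  have hpne : ∀ i, p i ≠ 0 := fun i => (hppos i).ne'
  have hkey : ∑ i, q i / p i = n := by
    have h1 : ∀ i, q i / p i = (n:ℝ) * (q i + lam * (q i * u i)) := by
      intro i
      simp only [hp_def]
      have := (hden i).ne'
      field_simp
    rw [Finset.sum_congr rfl (fun i _ => h1 i), ← Finset.mul_sum]
    have h2 : ∑ i, (q i + lam * (q i * u i)) = 1 := by
      rw [Finset.sum_add_distrib, hq1, ← Finset.mul_sum]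
      have h3 : ∑ i, q i * u i = 0 := hq2
      rw [h3, mul_zero, add_zero]
    rw [h2, mul_one]
  have hlog : ∑ i, Real.log (q i / p i) ≤ 0 := by
    calc ∑ i, Real.log (q i / p i) ≤ ∑ i, (q i / p i - 1) :=
          Finset.sum_le_sum (fun i _ => Real.log_le_sub_one_of_pos (div_pos (hq0 i) (hppos i)))
      _ = 0 := by
          rw [Finset.sum_sub_distrib, hkey]
          rw [Finset.sum_const, Finset.card_univ, Fintype.card_fin, nsmul_eq_mul, mul_one]
          ring
  have hprodle : ∏ i, (q i / p i) ≤ 1 := by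
    have h1 : ∏ i, (q i / p i) = Real.exp (∑ i, Real.log (q i / p i)) := by
      rw [Real.exp_sum]
      exact Finset.prod_congr rfl fun i _ =>
        (Real.exp_log (div_pos (hq0 i) (hppos i))).symm
    rw [h1]
    calc Real.exp (∑ i, Real.log (q i / p i)) ≤ Real.exp 0 := Real.exp_le_exp.mpr hlog
      _ = 1 := Real.exp_zero
  have hq_eq : ∏ i, q i = (∏ i, p i) * ∏ i, (q i / p i) := by
    rw [← Finset.prod_mul_distrib]
    exact Finset.prod_congr rfl fun i _ => (mul_div_cancel₀ _ (hpne i)).symm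
  rw [hq_eq]
  exact mul_le_of_le_one_right (le_of_lt (Finset.prod_pos (fun i _ => hppos i))) hprodle
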